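/- With the shifting construction f' defined from f (f'(x) = 2p_1 f(x) + (1-2p_1) f(x^1) when x_1 = 1, f'(x) = f(x) when x_1 = -1) and μ' the product measure obtained from μ = μ_p by replacing p_1 with 1/2, for every x ∈ {-1,1}^r we have μ'(x^1)f'(x^1) + μ'(x)f'(x) = μ(x^1)f(x^1) + μ(x)f(x). -/
import Mathlib


open Finset

noncomputable section

/-- The ±1 value of a Boolean coordinate. -/
def sgn (b : Bool) : ℝ := if b then 1 else -1

/-- Weight of a point of the cube `{-1,1}^r` under the product measure with
`P(x_i = 1) = p i`. -/
def wt {r : ℕ} (p : Fin r → ℝ) (x : Fin r → Bool) : ℝ :=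
  ∏ i, if x i then p i else 1 - p i

/-- Expectation of `f` under the product measure `μ_p`. -/
def Ex {r : ℕ} (p : Fin r → ℝ) (f : (Fin r → Bool) → ℝ) : ℝ :=
  ∑ x : Fin r → Bool, wt p x * f x

/-- Conditional expectation `E_{μ_p}[f | x_i = b]`. -/
def condEx {r : ℕ} (p : Fin r → ℝ) (f : (Fin r → Bool) → ℝ) (i : Fin r) (b : Bool) : ℝ :=
  (∑ x : Fin r → Bool, if x i = b then wt p x * f x else 0) / (if b then p i else 1 - p i)

/-- The uniform product measure (each `p i = 1/2`). -/
def half (r : ℕ) : Fin r → ℝ := fun _ => 1 / 2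

/-- `S x = Σ_i x_i` with coordinates interpreted as ±1. -/
def S {r : ℕ} (x : Fin r → Bool) : ℝ := ∑ i, sgn (x i)

/-- `x^1`: flip the first coordinate. -/
def flip1 {r : ℕ} (x : Fin (r+1) → Bool) : Fin (r+1) → Bool :=
  Function.update x 0 (!(x 0))

lemma wt_split {r : ℕ} (p : Fin (r+1) → ℝ) (x : Fin (r+1) → Bool) :
    wt p x = (if x 0 then p 0 else 1 - p 0) *
      ∏ i : Fin r, (if x i.succ then p i.succ else 1 - p i.succ) := by
  rw [wt, Fin.prod_univ_succ]

lemma flip1_zero {r : ℕ} (x : Fin (r+1) → Bool) : flip1 x 0 = !(x 0) := by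
  simp [flip1]

lemma flip1_succ {r : ℕ} (x : Fin (r+1) → Bool) (i : Fin r) : flip1 x i.succ = x i.succ := by
  simp [flip1, Function.update_of_ne (Fin.succ_ne_zero i)]

lemma flip1_flip1 {r : ℕ} (x : Fin (r+1) → Bool) : flip1 (flip1 x) = x := by
  funext i
  rcases Fin.eq_zero_or_eq_succ i with h | ⟨j, rfl⟩
  · subst h; simp [flip1_zero]
  · simp [flip1_succ]

/-- pointwise conservation of the signed measure under shifting:
μ'(x¹)f'(x¹) + μ'(x)f'(x) = μ(x¹)f(x¹) + μ(x)f(x), where μ' replaces p₁ by 1/2. -/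
theorem stmt2 {r : ℕ} (p : Fin (r+1) → ℝ) (hp : ∀ i, 0 ≤ p i ∧ p i ≤ 1)
    (hp1 : p 0 ≤ 1 / 2)
    (f f' : (Fin (r+1) → Bool) → ℝ)
    (hf : ∀ x, f x ∈ Set.Icc (-1 : ℝ) 1)
    (hf' : ∀ x, f' x =
      if x 0 then 2 * p 0 * f x + (1 - 2 * p 0) * f (flip1 x) else f x)
    (x : Fin (r+1) → Bool) :
    wt (Function.update p 0 (1/2)) (flip1 x) * f' (flip1 x)
        + wt (Function.update p 0 (1/2)) x * f' x
      = wt p (flip1 x) * f (flip1 x) + wt p x * f x := by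
  set q := Function.update p 0 (1/2 : ℝ) with hq
  have hrest : ∀ i : Fin r, q i.succ = p i.succ := fun i =>
    Function.update_of_ne (Fin.succ_ne_zero i) _ _
  set R := ∏ i : Fin r, (if x i.succ then p i.succ else 1 - p i.succ) with hR
  have hwtq : ∀ y : Fin (r+1) → Bool, (∀ i : Fin r, y i.succ = x i.succ) →
      wt q y = (if y 0 then (1/2:ℝ) else 1/2) * R := by
    intro y hy
    rw [wt_split, hR]
    congr 1
    · split <;> norm_num [hq]
    · exact Finset.prod_congr rfl fun i _ => by rw [hy, hrest]
  have hwtp : ∀ y : Fin (r+1) → Bool, (∀ i : Fin r, y i.succ = x i.succ) →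
      wt p y = (if y 0 then p 0 else 1 - p 0) * R := by
    intro y hy
    rw [wt_split, hR]
    congr 1
    exact Finset.prod_congr rfl fun i _ => by rw [hy]
  rw [hwtq _ (flip1_succ x), hwtq x (fun _ => rfl),
      hwtp _ (flip1_succ x), hwtp x (fun _ => rfl),
      hf' (flip1 x), hf' x, flip1_zero, flip1_flip1]
  cases h : x 0 <;> simp [h] <;> ring
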